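/- Saito's criterion for multiarrangements: let (A,m) be a multiarrangement in K^ℓ with defining polynomial Q(A,m) = Π_{H∈A} α_H^{m(H)}, and let θ_1,...,θ_ℓ ∈ D(A,m). Then det(θ_j(x_i))_{i,j} = f·Q(A,m) for some f ∈ S, and (θ_1,...,θ_ℓ) is a basis of D(A,m) if and only if f is a nonzero constant. Moreover, if the θ_i are homogeneous, they form a basis if and only if they are S-independent and Σ pdeg(θ_i) = |m|. -/

import Mathlib

open scoped Classical
open MvPolynomial

namespace ArrPaper

variable {K : Type*} [Field K] {ℓ : ℕ}

/-- The coordinate ring `S = K[x₁,…,x_ℓ]`. -/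
noncomputable abbrev S (K : Type*) [Field K] (ℓ : ℕ) := MvPolynomial (Fin ℓ) K

/-- The linear form associated to a covector `c`. -/
noncomputable def linForm (c : Fin ℓ → K) : S K ℓ :=
  ∑ i, MvPolynomial.C (c i) * MvPolynomial.X i

/-- The linear functional associated to a covector. -/
noncomputable def toFunc (c : Fin ℓ → K) : (Fin ℓ → K) →ₗ[K] K :=
  ∑ i, c i • LinearMap.proj i

/-- A (central) hyperplane arrangement, given by a finite set of nonzero,
pairwise non-proportional covectors (defining linear forms). -/
structure Arrangement (K : Type*) [Field K] (ℓ : ℕ) where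
  hyps : Finset (Fin ℓ → K)
  ne_zero : ∀ c ∈ hyps, c ≠ 0
  nonparallel : ∀ c ∈ hyps, ∀ c' ∈ hyps, c ≠ c' → ∀ t : K, c' ≠ t • c

/-- Derivations of the polynomial ring `S`. -/
abbrev Der (K : Type*) [Field K] (ℓ : ℕ) := Derivation K (S K ℓ) (S K ℓ)

/-- `θ` is a logarithmic derivation of the multiarrangement `(A, m)`, i.e.
`θ(α_H) ∈ α_H^{m(H)}·S` for all `H ∈ A`. -/
def IsLogDer (A : Arrangement K ℓ) (m : (Fin ℓ → K) → ℕ) (θ : Der K ℓ) : Prop :=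
  ∀ c ∈ A.hyps, (linForm c) ^ (m c) ∣ θ (linForm c)

/-- `θ` is homogeneous of polynomial degree `d`: `θ(α)` is homogeneous of degree `d`
for every linear form `α`. -/
def IsHomogOfDeg (θ : Der K ℓ) (d : ℕ) : Prop :=
  ∀ c : Fin ℓ → K, (θ (linForm c)).IsHomogeneous d

/-- `θ₁, …, θ_ℓ` form a basis of the `S`-module `D(A,m)`. -/
def IsDerBasis (A : Arrangement K ℓ) (m : (Fin ℓ → K) → ℕ) (θ : Fin ℓ → Der K ℓ) : Prop :=
  (∀ i, IsLogDer A m (θ i)) ∧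
  ∀ η : Der K ℓ, IsLogDer A m η → ∃! f : Fin ℓ → S K ℓ, η = ∑ i, f i • θ i

/-- `(A,m)` is free with a homogeneous basis of degrees (exponents) `d`. -/
def IsFreeWithExp (A : Arrangement K ℓ) (m : (Fin ℓ → K) → ℕ) (d : Fin ℓ → ℕ) : Prop :=
  ∃ θ : Fin ℓ → Der K ℓ, (∀ i, IsHomogOfDeg (θ i) (d i)) ∧ IsDerBasis A m θ

/-- `(A,m)` is a free multiarrangement. -/
def IsFree (A : Arrangement K ℓ) (m : (Fin ℓ → K) → ℕ) : Prop :=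
  ∃ d : Fin ℓ → ℕ, IsFreeWithExp A m d

/-- `|m|`, the total multiplicity. -/
def msum (A : Arrangement K ℓ) (m : (Fin ℓ → K) → ℕ) : ℕ := ∑ c ∈ A.hyps, m c

/-- The rank of an arrangement: the dimension of the span of its covectors. -/
noncomputable def rank (A : Arrangement K ℓ) : ℕ :=
  Module.finrank K (Submodule.span K (A.hyps : Set (Fin ℓ → K)))

/-- `A` is reducible: after a linear change of coordinates it is a product of two
arrangements in complementary (nonzero) subspaces.  In terms of covectors: the
covectors split between two complementary nonzero subspaces of the dual space. -/
def Reducible (A : Arrangement K ℓ) : Prop :=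
  ∃ W₁ W₂ : Submodule K (Fin ℓ → K), W₁ ≠ ⊥ ∧ W₂ ≠ ⊥ ∧ W₁ ⊓ W₂ = ⊥ ∧ W₁ ⊔ W₂ = ⊤ ∧
    ∀ c ∈ A.hyps, c ∈ W₁ ∨ c ∈ W₂

/-- The hyperplanes of the localization at a flat; the flat of codimension `r` is
encoded by the `r`-dimensional subspace `U` of the dual space spanned by the
covectors of the hyperplanes containing it. -/
noncomputable def locHyps (A : Arrangement K ℓ) (U : Submodule K (Fin ℓ → K)) :
    Finset (Fin ℓ → K) :=
  A.hyps.filter (· ∈ U)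

/-- `U` encodes a flat of `A` of codimension `r` (an element of `L_r(A)`). -/
def IsFlatOfRank (A : Arrangement K ℓ) (U : Submodule K (Fin ℓ → K)) (r : ℕ) : Prop :=
  Module.finrank K U = r ∧ Submodule.span K (locHyps A U : Set (Fin ℓ → K)) = U

/-- The localization `A_X` of `A` at the flat encoded by `U`. -/
noncomputable def localize (A : Arrangement K ℓ) (U : Submodule K (Fin ℓ → K)) :
    Arrangement K ℓ where
  hyps := locHyps A U
  ne_zero := fun c hc => A.ne_zero c (Finset.mem_filter.mp hc).1
  nonparallel := fun c hc c' hc' =>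
    A.nonparallel c (Finset.mem_filter.mp hc).1 c' (Finset.mem_filter.mp hc').1

/-- `H₀` (given by covector `c₀`) is a heavy hyperplane of `(A,m)`. -/
def IsHeavy (A : Arrangement K ℓ) (m : (Fin ℓ → K) → ℕ) (c₀ : Fin ℓ → K) : Prop :=
  c₀ ∈ A.hyps ∧ (∑ c ∈ A.hyps.erase c₀, m c) ≤ m c₀

/-- `H₀` (given by covector `c₀`) is a locally heavy hyperplane of `(A,m)`. -/
def IsLocallyHeavy (A : Arrangement K ℓ) (m : (Fin ℓ → K) → ℕ) (c₀ : Fin ℓ → K) : Prop :=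
  c₀ ∈ A.hyps ∧ ∀ U : Submodule K (Fin ℓ → K), IsFlatOfRank A U 2 → c₀ ∈ U →
    3 ≤ (locHyps A U).card → (∑ c ∈ (locHyps A U).erase c₀, m c) ≤ m c₀

/-- `b` is the second Betti number of the rank-2 localization of `(A,m)` at `U`:
the product of the nonzero exponents of this free rank-2 multiarrangement. -/
def IsLocalB2 (A : Arrangement K ℓ) (m : (Fin ℓ → K) → ℕ)
    (U : Submodule K (Fin ℓ → K)) (b : ℕ) : Prop :=
  ∃ d : Fin ℓ → ℕ, IsFreeWithExp (localize A U) m d ∧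
    b = ∏ i ∈ Finset.univ.filter (fun i => d i ≠ 0), d i

/-- `b` is the second Betti number `b₂(A,m)` of the multiarrangement `(A,m)`. -/
def IsB2 (A : Arrangement K ℓ) (m : (Fin ℓ → K) → ℕ) (b : ℕ) : Prop :=
  ∃ bloc : Submodule K (Fin ℓ → K) → ℕ,
    (∀ U, IsFlatOfRank A U 2 → IsLocalB2 A m U (bloc U)) ∧
    b = ∑ᶠ U ∈ {U : Submodule K (Fin ℓ → K) | IsFlatOfRank A U 2}, bloc U

/-- The second Betti number of a simple arrangement:
`b₂(A) = Σ_{X ∈ L₂(A)} (|A_X| - 1)`. -/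
noncomputable def b2Simple (A : Arrangement K ℓ) : ℕ :=
  ∑ᶠ U ∈ {U : Submodule K (Fin ℓ → K) | IsFlatOfRank A U 2}, ((locHyps A U).card - 1)

/-- The Euler–Ziegler multiplicity of the restricted hyperplane `H₀ ∩ ker(c)` of
`A^{H₀}`: `m^{H₀}(X) = |m_X| - m(H₀)`. -/
noncomputable def EZmult (A : Arrangement K ℓ) (m : (Fin ℓ → K) → ℕ)
    (c₀ c : Fin ℓ → K) : ℕ :=
  (∑ c' ∈ A.hyps.filter (· ∈ Submodule.span K ({c₀, c} : Set (Fin ℓ → K))), m c') - m c₀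

/-- Two covectors are parallel (define the same hyperplane). -/
def Parallel {n : ℕ} (b b' : Fin n → K) : Prop := ∃ t : K, t ≠ 0 ∧ b' = t • b

/-- The covector on `K^n` obtained by restricting the covector `c` on `K^{n+1}` to the
hyperplane `ker c₀`, transported by the linear isomorphism `e : ker c₀ ≃ K^n`. -/
noncomputable def resCov {n : ℕ} (c₀ : Fin (n+1) → K)
    (e : ↥(LinearMap.ker (toFunc c₀)) ≃ₗ[K] (Fin n → K)) (c : Fin (n+1) → K) :
    Fin n → K :=
  fun j => toFunc c ((e.symm (Pi.single j 1) : ↥(LinearMap.ker (toFunc c₀))) : Fin (n+1) → K)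

/-- `(B, mB)` is (a model, in coordinates, of) the Euler–Ziegler restriction
`(A^{H₀}, m^{H₀})` of `(A,m)` to the hyperplane `H₀ = ker c₀ ∈ A`. -/
def IsEZRes {n : ℕ} (A : Arrangement K (n+1)) (m : (Fin (n+1) → K) → ℕ)
    (c₀ : Fin (n+1) → K) (B : Arrangement K n) (mB : (Fin n → K) → ℕ) : Prop :=
  c₀ ∈ A.hyps ∧
  ∃ e : ↥(LinearMap.ker (toFunc c₀)) ≃ₗ[K] (Fin n → K),
    (∀ c ∈ A.hyps.erase c₀, ∃ b ∈ B.hyps,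
        Parallel b (resCov c₀ e c) ∧ mB b = EZmult A m c₀ c) ∧
    (∀ b ∈ B.hyps, ∃ c ∈ A.hyps.erase c₀, Parallel b (resCov c₀ e c))

/-- A combinatorial equivalence between two arrangements: a bijection between the
hyperplanes inducing an isomorphism of intersection lattices (it preserves the rank
of every subset of hyperplanes). -/
def CombEquiv (A A' : Arrangement K ℓ) : Prop :=
  ∃ φ : (Fin ℓ → K) → (Fin ℓ → K), Set.BijOn φ ↑A.hyps ↑A'.hyps ∧
    ∀ T : Finset (Fin ℓ → K), T ⊆ A.hyps →
      Module.finrank K (Submodule.span K (T : Set (Fin ℓ → K))) =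
      Module.finrank K (Submodule.span K ((T.image φ) : Set (Fin ℓ → K)))


section Aux

variable {σ : Type*}

lemma hc_td_ne_zero {p : MvPolynomial σ K} (hp : p ≠ 0) :
    homogeneousComponent p.totalDegree p ≠ 0 := by
  classical
  obtain ⟨d, hd, hdeg⟩ := p.support.exists_mem_eq_sup
    (MvPolynomial.support_nonempty.mpr hp) (fun s => s.sum fun _ e => e)
  intro h
  have : coeff d (homogeneousComponent p.totalDegree p) = coeff d p := by
    rw [coeff_homogeneousComponent, if_pos]
    rw [MvPolynomial.totalDegree, hdeg]
    rfl
  rw [h] at this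
  exact (MvPolynomial.mem_support_iff.mp hd) (by simpa using this.symm)

lemma hc_top_mul (p q : MvPolynomial σ K) :
    homogeneousComponent (p.totalDegree + q.totalDegree) (p * q)
      = homogeneousComponent p.totalDegree p * homogeneousComponent q.totalDegree q := by
  classical
  set a := p.totalDegree with ha
  set b := q.totalDegree with hb
  have key : ∀ k l : ℕ, homogeneousComponent (a + b)
      (homogeneousComponent k p * homogeneousComponent l q)
      = if a + b = k + l then homogeneousComponent k p * homogeneousComponent l q else 0 :=
    fun k l => homogeneousComponent_of_mem
      ((homogeneousComponent_isHomogeneous k p).mul (homogeneousComponent_isHomogeneous l q))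
  conv_lhs => rw [← sum_homogeneousComponent p, ← sum_homogeneousComponent q]
  rw [Finset.sum_mul_sum]
  simp only [map_sum, ← ha, ← hb]
  rw [Finset.sum_eq_single a]
  · rw [Finset.sum_eq_single b]
    · rw [key, if_pos rfl]
    · intro l hl hne
      rw [key, if_neg (by rw [Finset.mem_range, Nat.lt_succ_iff] at hl; omega)]
    · intro h; exact absurd (Finset.self_mem_range_succ b) h
  · intro k hk hne
    rw [Finset.mem_range, Nat.lt_succ_iff] at hk
    apply Finset.sum_eq_zero
    intro l hl
    rw [Finset.mem_range, Nat.lt_succ_iff] at hl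
    rw [key, if_neg (by omega)]
  · intro h; exact absurd (Finset.self_mem_range_succ a) h

lemma totalDegree_mul_eq {p q : MvPolynomial σ K} (hp : p ≠ 0) (hq : q ≠ 0) :
    (p * q).totalDegree = p.totalDegree + q.totalDegree := by
  refine le_antisymm (MvPolynomial.totalDegree_mul p q) ?_
  have h := hc_top_mul p q
  have hne : homogeneousComponent (p.totalDegree + q.totalDegree) (p * q) ≠ 0 := by
    rw [h]
    exact mul_ne_zero (hc_td_ne_zero hp) (hc_td_ne_zero hq)
  obtain ⟨d, hd⟩ := MvPolynomial.ne_zero_iff.mp hne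
  have hdd : d.degree = p.totalDegree + q.totalDegree := by
    by_contra hcon
    rw [coeff_homogeneousComponent, if_neg hcon] at hd
    exact hd rfl
  have hdp : coeff d (p * q) ≠ 0 := by
    rw [coeff_homogeneousComponent, if_pos hdd] at hd
    exact hd
  calc p.totalDegree + q.totalDegree = d.degree := hdd.symm
    _ = d.sum fun _ e => e := rfl
    _ ≤ (p * q).totalDegree := MvPolynomial.le_totalDegree (MvPolynomial.mem_support_iff.mpr hdp)

lemma eq_C_of_td_zero {p : MvPolynomial σ K} (h : p.totalDegree = 0) :
    p = MvPolynomial.C (coeff 0 p) := by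
  have h0 : p.IsHomogeneous 0 := isHomogeneous_of_totalDegree_zero (σ := σ) h
  have h2 := homogeneousComponent_of_mem (m := 0) ((mem_homogeneousSubmodule 0 p).mpr h0)
  rw [if_pos rfl] at h2
  conv_lhs => rw [← h2]
  rw [homogeneousComponent_zero]

lemma isUnit_S_iff {p : MvPolynomial σ K} : IsUnit p ↔ ∃ t : K, t ≠ 0 ∧ p = MvPolynomial.C t := by
  constructor
  · rintro ⟨u, rfl⟩
    have h1 : (u : MvPolynomial σ K) * (u⁻¹ : Units _) = 1 := u.mul_inv
    have hu : (u : MvPolynomial σ K) ≠ 0 := u.ne_zero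
    have hui : ((u⁻¹ : Units _) : MvPolynomial σ K) ≠ 0 := Units.ne_zero _
    have htd : (u : MvPolynomial σ K).totalDegree = 0 := by
      have := totalDegree_mul_eq hu hui
      rw [h1] at this
      simp at this
      omega
    refine ⟨coeff 0 (u : MvPolynomial σ K), ?_, eq_C_of_td_zero htd⟩
    intro h0
    rw [eq_C_of_td_zero htd, h0, map_zero] at hu
    exact hu rfl
  · rintro ⟨t, ht, rfl⟩
    exact IsUnit.of_mul_eq_one (MvPolynomial.C t⁻¹)
      (by rw [← MvPolynomial.C_mul, mul_inv_cancel₀ ht, MvPolynomial.C_1])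


lemma coeff_single_linForm (c : Fin ℓ → K) (i : Fin ℓ) :
    MvPolynomial.coeff (Finsupp.single i 1) (linForm c) = c i := by
  classical
  simp [linForm, MvPolynomial.coeff_sum, MvPolynomial.coeff_C_mul, MvPolynomial.coeff_X',
    Finsupp.single_left_inj, Finset.sum_ite_eq']

lemma linForm_eq_zero_iff {c : Fin ℓ → K} : linForm c = 0 ↔ c = 0 := by
  constructor
  · intro h
    funext i
    have := coeff_single_linForm c i
    rw [h] at this
    simpa using this.symm
  · rintro rfl; simp [linForm]

lemma linForm_smul (t : K) (c : Fin ℓ → K) :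
    linForm (t • c) = MvPolynomial.C t * linForm c := by
  simp [linForm, Finset.mul_sum, mul_assoc, MvPolynomial.C_mul]

lemma linForm_isHomogeneous (c : Fin ℓ → K) : (linForm c).IsHomogeneous 1 :=
  MvPolynomial.IsHomogeneous.sum _ _ _ fun i _ => MvPolynomial.isHomogeneous_C_mul_X _ _

lemma linForm_ne_zero {c : Fin ℓ → K} (hc : c ≠ 0) : linForm c ≠ 0 :=
  fun h => hc (linForm_eq_zero_iff.mp h)

lemma linForm_td {c : Fin ℓ → K} (hc : c ≠ 0) : (linForm c).totalDegree = 1 :=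
  (linForm_isHomogeneous c).totalDegree (linForm_ne_zero hc)

lemma linForm_not_isUnit {c : Fin ℓ → K} (hc : c ≠ 0) : ¬ IsUnit (linForm c) := by
  rw [isUnit_S_iff]
  rintro ⟨t, ht, h⟩
  have := linForm_td hc
  rw [h] at this
  simp at this

lemma linForm_irreducible {c : Fin ℓ → K} (hc : c ≠ 0) : Irreducible (linForm c) := by
  refine ⟨linForm_not_isUnit hc, fun p q hpq => ?_⟩
  by_contra hcon
  push_neg at hcon
  obtain ⟨hp, hq⟩ := hcon
  have hp0 : p ≠ 0 := by rintro rfl; exact linForm_ne_zero hc (by rw [hpq, zero_mul])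
  have hq0 : q ≠ 0 := by rintro rfl; exact linForm_ne_zero hc (by rw [hpq, mul_zero])
  have h1 : p.totalDegree + q.totalDegree = 1 := by
    rw [← totalDegree_mul_eq hp0 hq0, ← hpq, linForm_td hc]
  rcases Nat.add_eq_one_iff.mp h1 with ⟨hp1, _⟩ | ⟨_, hq1⟩
  · apply hp
    rw [isUnit_S_iff]
    refine ⟨coeff 0 p, ?_, eq_C_of_td_zero hp1⟩
    intro h0
    apply hp0
    rw [eq_C_of_td_zero hp1, h0, map_zero]
  · apply hq
    rw [isUnit_S_iff]
    refine ⟨coeff 0 q, ?_, eq_C_of_td_zero hq1⟩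
    intro h0
    apply hq0
    rw [eq_C_of_td_zero hq1, h0, map_zero]

lemma linForm_prime {c : Fin ℓ → K} (hc : c ≠ 0) : Prime (linForm c) :=
  (UniqueFactorizationMonoid.irreducible_iff_prime).mp (linForm_irreducible hc)

lemma linForm_not_dvd {c c' : Fin ℓ → K} (hc : c ≠ 0) (hc' : c' ≠ 0)
    (h : ∀ t : K, c' ≠ t • c) : ¬ linForm c ∣ linForm c' := by
  rintro ⟨u, hu⟩
  have hu0 : u ≠ 0 := by
    rintro rfl
    exact linForm_ne_zero hc' (by rw [hu, mul_zero])
  have htd : u.totalDegree = 0 := by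
    have := totalDegree_mul_eq (linForm_ne_zero hc) hu0
    rw [← hu, linForm_td hc', linForm_td hc] at this
    omega
  have hC := eq_C_of_td_zero htd
  set t := coeff 0 u with htdef
  apply h t
  funext i
  have : linForm c' = linForm (t • c) := by
    rw [linForm_smul, hu, hC, mul_comm]
  have h2 := congrArg (MvPolynomial.coeff (Finsupp.single i 1)) this
  rw [coeff_single_linForm, coeff_single_linForm] at h2
  exact h2


lemma der_sum_apply {ι : Type*} (s : Finset ι) (D : ι → Der K ℓ) (p : S K ℓ) :
    (∑ i ∈ s, D i) p = ∑ i ∈ s, D i p := by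
  induction s using Finset.cons_induction with
  | empty => simp
  | cons a s ha ih => rw [Finset.sum_cons, Finset.sum_cons, Derivation.add_apply, ih]

lemma der_linForm (θ : Der K ℓ) (c : Fin ℓ → K) :
    θ (linForm c) = ∑ i, MvPolynomial.C (c i) * θ (MvPolynomial.X i) := by
  rw [linForm, map_sum]
  congr 1
  funext i
  rw [← MvPolynomial.smul_eq_C_mul, ← MvPolynomial.smul_eq_C_mul, Derivation.map_smul]

lemma linForm_single (i : Fin ℓ) : linForm (Pi.single i (1:K)) = MvPolynomial.X i := by
  rw [linForm]
  rw [Finset.sum_eq_single i]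
  · simp
  · intro b _ hb; simp [Pi.single_eq_of_ne hb]
  · simp

lemma sum_smul_der_apply (f : Fin ℓ → S K ℓ) (θ : Fin ℓ → Der K ℓ) (p : S K ℓ) :
    (∑ i, f i • θ i) p = ∑ i, f i * θ i p := by
  rw [der_sum_apply]
  exact Finset.sum_congr rfl fun i _ => rfl


end Aux


section Saito

/-- The Saito matrix of a family of derivations. -/
noncomputable def saito (θ : Fin ℓ → Der K ℓ) : Matrix (Fin ℓ) (Fin ℓ) (S K ℓ) :=
  Matrix.of fun i j => θ j (MvPolynomial.X i)

lemma pow_dvd_det {c : Fin ℓ → K} (hc : c ≠ 0) (mc : ℕ) (θ : Fin ℓ → Der K ℓ)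
    (hθ : ∀ j, linForm c ^ mc ∣ θ j (linForm c)) :
    linForm c ^ mc ∣ (saito θ).det := by
  classical
  obtain ⟨i₀, hi₀⟩ := Function.ne_iff.mp hc
  set M := saito θ with hM
  set v : Fin ℓ → S K ℓ := fun j => θ j (linForm c) with hv
  have hrow : v = ∑ i, (MvPolynomial.C (c i) : S K ℓ) • M i := by
    funext j
    simp only [Finset.sum_apply, Pi.smul_apply, smul_eq_mul]
    exact der_linForm (θ j) c
  have hcr : Matrix.cramer M.transpose v i₀ = MvPolynomial.C (c i₀) * M.det := by
    rw [hrow, map_sum]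
    have : ∀ i : Fin ℓ, Matrix.cramer M.transpose ((MvPolynomial.C (c i) : S K ℓ) • M i)
        = (MvPolynomial.C (c i) : S K ℓ) • (Pi.single i M.det : Fin ℓ → S K ℓ) := by
      intro i
      rw [LinearMap.map_smul, Matrix.cramer_transpose_row_self]
    simp only [this]
    rw [Finset.sum_apply]
    rw [Finset.sum_eq_single i₀]
    · simp
    · intro b _ hb
      simp only [Pi.smul_apply, smul_eq_mul]
      rw [Pi.single_eq_of_ne (Ne.symm hb), mul_zero]
    · simp
  have hupd : Matrix.cramer M.transpose v i₀ = (M.updateRow i₀ v).det :=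
    Matrix.cramer_transpose_apply M v i₀
  -- divisibility of the updated determinant
  have hdvd : linForm c ^ mc ∣ (M.updateRow i₀ v).det := by
    choose w hw using hθ
    have hvw : v = (linForm c ^ mc) • (w : Fin ℓ → S K ℓ) := by
      funext j
      simp only [Pi.smul_apply, smul_eq_mul]
      exact hw j
    rw [hvw, Matrix.det_updateRow_smul]
    exact Dvd.intro _ rfl
  have hi₀' : c i₀ ≠ 0 := hi₀
  have hC : MvPolynomial.C ((c i₀)⁻¹) * (MvPolynomial.C (c i₀) * M.det) = M.det := by
    rw [← mul_assoc, ← MvPolynomial.C_mul, inv_mul_cancel₀ hi₀', MvPolynomial.C_1, one_mul]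
  calc linForm c ^ mc ∣ MvPolynomial.C (c i₀) * M.det := by rw [← hcr, hupd]; exact hdvd
    _ ∣ MvPolynomial.C ((c i₀)⁻¹) * (MvPolynomial.C (c i₀) * M.det) := Dvd.intro_left _ rfl
    _ = M.det := hC

lemma linForm_not_dvd_of_mem (A : Arrangement K ℓ) {c c' : Fin ℓ → K}
    (hc : c ∈ A.hyps) (hc' : c' ∈ A.hyps) (hne : c ≠ c') :
    ¬ linForm c ∣ linForm c' :=
  linForm_not_dvd (A.ne_zero c hc) (A.ne_zero c' hc')
    (A.nonparallel c hc c' hc' hne)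

lemma prod_pow_dvd_of_dvd (A : Arrangement K ℓ) (m : (Fin ℓ → K) → ℕ)
    (s : Finset (Fin ℓ → K)) (hs : s ⊆ A.hyps) (n : S K ℓ)
    (h : ∀ c ∈ s, linForm c ^ m c ∣ n) :
    (∏ c ∈ s, linForm c ^ m c) ∣ n := by
  classical
  induction s using Finset.cons_induction generalizing n with
  | empty => simp
  | cons c₀ s hc₀s ih =>
    have hc₀A : c₀ ∈ A.hyps := hs (Finset.mem_cons_self _ _)
    have hsA : s ⊆ A.hyps := fun x hx => hs (Finset.mem_cons.mpr (Or.inr hx))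
    obtain ⟨n', hn'⟩ := h c₀ (Finset.mem_cons_self _ _)
    have hrest : ∀ c ∈ s, linForm c ^ m c ∣ n' := by
      intro c hcs
      have hcA : c ∈ A.hyps := hsA hcs
      have hne : c ≠ c₀ := fun hh => hc₀s (hh ▸ hcs)
      have hprime : Prime (linForm c) := linForm_prime (A.ne_zero c hcA)
      have hnd : ¬ linForm c ∣ linForm c₀ ^ m c₀ := by
        intro hdd
        exact linForm_not_dvd_of_mem A hcA hc₀A hne (hprime.dvd_of_dvd_pow hdd)
      have := h c (Finset.mem_cons.mpr (Or.inr hcs))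
      rw [hn'] at this
      exact hprime.pow_dvd_of_dvd_mul_left _ hnd this
    rw [Finset.prod_cons, hn']
    exact mul_dvd_mul_left _ (ih hsA n' hrest)

lemma Q_dvd_det (A : Arrangement K ℓ) (m : (Fin ℓ → K) → ℕ) (θ : Fin ℓ → Der K ℓ)
    (hθ : ∀ i, IsLogDer A m (θ i)) :
    (∏ c ∈ A.hyps, linForm c ^ m c) ∣ (saito θ).det := by
  refine prod_pow_dvd_of_dvd A m A.hyps le_rfl _ (fun c hcA => ?_)
  exact pow_dvd_det (A.ne_zero c hcA) (m c) θ (fun j => hθ j c hcA)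

end Saito


section Basis

/-- The defining polynomial of the multiarrangement. -/
noncomputable def Qp (A : Arrangement K ℓ) (m : (Fin ℓ → K) → ℕ) : S K ℓ :=
  ∏ c ∈ A.hyps, linForm c ^ m c

lemma Qp_ne_zero (A : Arrangement K ℓ) (m : (Fin ℓ → K) → ℕ) : Qp A m ≠ 0 := by
  rw [Qp, Finset.prod_ne_zero_iff]
  intro c hc
  exact pow_ne_zero _ (linForm_ne_zero (A.ne_zero c hc))

lemma Qp_isHomogeneous (A : Arrangement K ℓ) (m : (Fin ℓ → K) → ℕ) :
    (Qp A m).IsHomogeneous (msum A m) := by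
  rw [Qp, msum]
  refine MvPolynomial.IsHomogeneous.prod _ _ _ (fun c _ => ?_)
  simpa using (linForm_isHomogeneous c).pow (m c)

lemma repr_unique {θ : Fin ℓ → Der K ℓ} (hdet0 : (saito θ).det ≠ 0)
    {f f' : Fin ℓ → S K ℓ} (h : ∑ i, f i • θ i = ∑ i, f' i • θ i) : f = f' := by
  classical
  set M := saito θ with hM
  have hmv : M.mulVec f = M.mulVec f' := by
    funext k
    simp only [Matrix.mulVec, dotProduct]
    have h1 := congrArg (fun D : Der K ℓ => D (MvPolynomial.X k)) h
    simp only [sum_smul_der_apply] at h1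
    calc ∑ j, M k j * f j = ∑ j, f j * θ j (MvPolynomial.X k) :=
          Finset.sum_congr rfl (fun j _ => mul_comm _ _)
      _ = ∑ j, f' j * θ j (MvPolynomial.X k) := h1
      _ = ∑ j, M k j * f' j := Finset.sum_congr rfl (fun j _ => mul_comm _ _)
  have h2 : M.det • f = M.det • f' := by
    have e1 : ∀ g : Fin ℓ → S K ℓ, (M.adjugate).mulVec (M.mulVec g) = M.det • g := by
      intro g
      rw [Matrix.mulVec_mulVec, Matrix.adjugate_mul, Matrix.smul_mulVec,
        Matrix.one_mulVec]
    rw [← e1 f, ← e1 f', hmv]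
  funext i
  have := congrFun h2 i
  simp only [Pi.smul_apply, smul_eq_mul] at this
  exact mul_left_cancel₀ hdet0 this

lemma isDerBasis_of_det (A : Arrangement K ℓ) (m : (Fin ℓ → K) → ℕ)
    (θ : Fin ℓ → Der K ℓ) (hθ : ∀ i, IsLogDer A m (θ i)) {t : K} (ht : t ≠ 0)
    (hdet : (saito θ).det = MvPolynomial.C t * Qp A m) :
    IsDerBasis A m θ := by
  classical
  set M := saito θ with hM
  have hQ0 : Qp A m ≠ 0 := Qp_ne_zero A m
  have hCt : (MvPolynomial.C t : S K ℓ) ≠ 0 := by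
    simpa using ht
  have hdet0 : M.det ≠ 0 := by rw [hdet]; exact mul_ne_zero hCt hQ0
  refine ⟨hθ, fun η hη => ?_⟩
  set v : Fin ℓ → S K ℓ := fun k => η (MvPolynomial.X k) with hv
  have hcdvd : ∀ j, Qp A m ∣ Matrix.cramer M v j := by
    intro j
    rw [Matrix.cramer_apply]
    have hupd : M.updateCol j v = saito (Function.update θ j η) := by
      apply Matrix.ext
      intro i j'
      rw [Matrix.updateCol_apply]
      by_cases h : j' = j
      · subst h; rw [if_pos rfl]; simp [saito, hv]
      · rw [if_neg h]
        show M i j' = Function.update θ j η j' (MvPolynomial.X i)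
        rw [Function.update_of_ne h]
        rfl
    rw [hupd]
    refine Q_dvd_det A m _ (fun i' => ?_)
    by_cases h : i' = j
    · subst h; rw [Function.update_self]; exact hη
    · rw [Function.update_of_ne h]; exact hθ i'
  choose h hh using hcdvd
  have key : ∀ k, ∑ j, M k j * h j = MvPolynomial.C t * v k := by
    intro k
    have hmv := congrFun (Matrix.mulVec_cramer M v) k
    simp only [Matrix.mulVec, dotProduct, Pi.smul_apply, smul_eq_mul] at hmv
    have hmv2 : ∑ j, M k j * (Qp A m * h j) = MvPolynomial.C t * Qp A m * v k := by
      calc ∑ j, M k j * (Qp A m * h j) = ∑ j, M k j * Matrix.cramer M v j :=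
            Finset.sum_congr rfl (fun j _ => by rw [← hh j])
        _ = M.det * v k := hmv
        _ = MvPolynomial.C t * Qp A m * v k := by rw [hdet]
    apply mul_left_cancel₀ hQ0
    calc Qp A m * ∑ j, M k j * h j = ∑ j, M k j * (Qp A m * h j) := by
          rw [Finset.mul_sum]; exact Finset.sum_congr rfl (fun j _ => by ring)
      _ = MvPolynomial.C t * Qp A m * v k := hmv2
      _ = Qp A m * (MvPolynomial.C t * v k) := by ring
  refine ⟨fun j => MvPolynomial.C t⁻¹ * h j, ?_, ?_⟩
  · apply MvPolynomial.derivation_ext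
    intro k
    rw [sum_smul_der_apply]
    calc η (MvPolynomial.X k) = v k := rfl
      _ = MvPolynomial.C t⁻¹ * (MvPolynomial.C t * v k) := by
          rw [← mul_assoc, ← MvPolynomial.C_mul, inv_mul_cancel₀ ht, MvPolynomial.C_1, one_mul]
      _ = MvPolynomial.C t⁻¹ * ∑ j, M k j * h j := by rw [key k]
      _ = ∑ j, MvPolynomial.C t⁻¹ * h j * θ j (MvPolynomial.X k) := by
          rw [Finset.mul_sum]
          exact Finset.sum_congr rfl (fun j _ => by
            show MvPolynomial.C t⁻¹ * (θ j (MvPolynomial.X k) * h j) = _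
            ring)
  · intro f' hf'
    apply repr_unique hdet0
    rw [← hf']
    apply MvPolynomial.derivation_ext
    intro k
    rw [sum_smul_der_apply]
    calc η (MvPolynomial.X k) = v k := rfl
      _ = MvPolynomial.C t⁻¹ * (MvPolynomial.C t * v k) := by
          rw [← mul_assoc, ← MvPolynomial.C_mul, inv_mul_cancel₀ ht, MvPolynomial.C_1, one_mul]
      _ = MvPolynomial.C t⁻¹ * ∑ j, M k j * h j := by rw [key k]
      _ = ∑ j, MvPolynomial.C t⁻¹ * h j * θ j (MvPolynomial.X k) := by
          rw [Finset.mul_sum]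
          exact Finset.sum_congr rfl (fun j _ => by
            show MvPolynomial.C t⁻¹ * (θ j (MvPolynomial.X k) * h j) = _
            ring)

end Basis


section Converse

lemma det_dvd_det (A : Arrangement K ℓ) (m : (Fin ℓ → K) → ℕ) (θ : Fin ℓ → Der K ℓ)
    (hB : IsDerBasis A m θ) (ξ : Fin ℓ → Der K ℓ) (hξ : ∀ j, IsLogDer A m (ξ j)) :
    (saito θ).det ∣ (saito ξ).det := by
  classical
  choose g hg _ using fun j => hB.2 (ξ j) (hξ j)
  set G : Matrix (Fin ℓ) (Fin ℓ) (S K ℓ) := Matrix.of (fun i j => g j i) with hG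
  have hfact : saito ξ = saito θ * G := by
    apply Matrix.ext
    intro k j
    have h1 := congrArg (fun D : Der K ℓ => D (MvPolynomial.X k)) (hg j)
    simp only [sum_smul_der_apply] at h1
    calc saito ξ k j = ξ j (MvPolynomial.X k) := rfl
      _ = ∑ i, g j i * θ i (MvPolynomial.X k) := h1
      _ = ∑ i, saito θ k i * G i j := Finset.sum_congr rfl (fun i _ => mul_comm _ _)
      _ = (saito θ * G) k j := (Matrix.mul_apply).symm
  rw [hfact, Matrix.det_mul]
  exact Dvd.intro _ rfl

/-- `Q·∂ᵢ`-style derivation: values `w k` on `X k`. -/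
lemma mkDer_logDer (A : Arrangement K ℓ) (m : (Fin ℓ → K) → ℕ) (w : Fin ℓ → S K ℓ)
    (h : ∀ c ∈ A.hyps, linForm c ^ m c ∣ ∑ k, MvPolynomial.C (c k) * w k) :
    IsLogDer A m (MvPolynomial.mkDerivation K w) := by
  intro c hc
  rw [der_linForm]
  simpa only [MvPolynomial.mkDerivation_X] using h c hc

lemma pow_dvd_Qp (A : Arrangement K ℓ) (m : (Fin ℓ → K) → ℕ) {c : Fin ℓ → K}
    (hc : c ∈ A.hyps) : linForm c ^ m c ∣ Qp A m :=
  Finset.dvd_prod_of_mem _ hc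

lemma det_dvd_Qpow (A : Arrangement K ℓ) (m : (Fin ℓ → K) → ℕ) (θ : Fin ℓ → Der K ℓ)
    (hB : IsDerBasis A m θ) :
    (saito θ).det ∣ (Qp A m) ^ ℓ := by
  classical
  set Qd : Fin ℓ → Der K ℓ :=
    fun i => MvPolynomial.mkDerivation K (fun k => if k = i then Qp A m else 0) with hQd
  have hlog : ∀ i, IsLogDer A m (Qd i) := by
    intro i
    apply mkDer_logDer
    intro c hc
    have : ∑ k, MvPolynomial.C (c k) * (if k = i then Qp A m else 0)
        = MvPolynomial.C (c i) * Qp A m := by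
      rw [Finset.sum_eq_single i]
      · rw [if_pos rfl]
      · intro b _ hb; rw [if_neg hb, mul_zero]
      · simp
    rw [this]
    exact (pow_dvd_Qp A m hc).mul_left _
  have hsQD : saito Qd = (Qp A m) • (1 : Matrix (Fin ℓ) (Fin ℓ) (S K ℓ)) := by
    apply Matrix.ext
    intro k j
    calc saito Qd k j = (if k = j then Qp A m else 0) := by
          show MvPolynomial.mkDerivation K _ (MvPolynomial.X k) = _
          rw [MvPolynomial.mkDerivation_X]
      _ = Qp A m * (if k = j then 1 else 0) := by split <;> simp
      _ = ((Qp A m) • (1 : Matrix (Fin ℓ) (Fin ℓ) (S K ℓ))) k j := by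
          simp [Matrix.smul_apply, Matrix.one_apply]
  have hdet : (saito Qd).det = (Qp A m) ^ ℓ := by
    rw [hsQD, Matrix.det_smul, Matrix.det_one, mul_one]
    simp
  rw [← hdet]
  exact det_dvd_det A m θ hB Qd hlog

lemma det_dvd_Qres (A : Arrangement K ℓ) (m : (Fin ℓ → K) → ℕ) (θ : Fin ℓ → Der K ℓ)
    (hB : IsDerBasis A m θ) {c : Fin ℓ → K} (hc : c ∈ A.hyps) :
    (saito θ).det ∣ Qp A m * (∏ c' ∈ A.hyps.erase c, linForm c' ^ m c') ^ (ℓ - 1) := by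
  classical
  have hc0 : c ≠ 0 := A.ne_zero c hc
  obtain ⟨i₀, hi₀⟩ := Function.ne_iff.mp hc0
  have hi₀' : c i₀ ≠ 0 := hi₀
  set Q' : S K ℓ := ∏ c' ∈ A.hyps.erase c, linForm c' ^ m c' with hQ'
  have hQsplit : Qp A m = linForm c ^ m c * Q' := by
    rw [Qp, hQ', ← Finset.mul_prod_erase _ _ hc]
  -- the derivations ξ_j
  set N : Matrix (Fin ℓ) (Fin ℓ) (S K ℓ) := Matrix.of (fun k j =>
    if j = i₀ then (if k = i₀ then Qp A m else 0)
    else Q' * ((if k = j then 1 else 0)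
      - MvPolynomial.C (c j / c i₀) * (if k = i₀ then 1 else 0))) with hN
  set ξ : Fin ℓ → Der K ℓ := fun j => MvPolynomial.mkDerivation K (fun k => N k j) with hξ
  have hlog : ∀ j, IsLogDer A m (ξ j) := by
    intro j
    apply mkDer_logDer
    intro c' hc'
    by_cases hj : j = i₀
    · subst hj
      have : ∑ k, MvPolynomial.C (c' k) * N k j
          = MvPolynomial.C (c' j) * Qp A m := by
        rw [Finset.sum_eq_single j]
        · simp [hN]
        · intro b _ hb
          simp [hN, if_neg hb]
        · simp
      rw [this]
      exact (pow_dvd_Qp A m hc').mul_left _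
    · have hval : ∑ k, MvPolynomial.C (c' k) * N k j
          = Q' * MvPolynomial.C (c' j - c j / c i₀ * c' i₀) := by
        have expand : ∀ k, MvPolynomial.C (c' k) * N k j
            = Q' * (MvPolynomial.C (c' k) * (if k = j then 1 else 0))
              - Q' * (MvPolynomial.C (c j / c i₀) * (MvPolynomial.C (c' k) * (if k = i₀ then 1 else 0))) := by
          intro k
          simp only [hN, Matrix.of_apply, if_neg hj]
          ring
        rw [Finset.sum_congr rfl (fun k _ => expand k), Finset.sum_sub_distrib,
          ← Finset.mul_sum, ← Finset.mul_sum, ← Finset.mul_sum]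
        have s1 : ∑ k, MvPolynomial.C (c' k) * (if k = j then (1:S K ℓ) else 0)
            = MvPolynomial.C (c' j) := by
          rw [Finset.sum_eq_single j]
          · rw [if_pos rfl, mul_one]
          · intro b _ hb; rw [if_neg hb, mul_zero]
          · simp
        have s2 : ∑ k, MvPolynomial.C (c' k) * (if k = i₀ then (1:S K ℓ) else 0)
            = MvPolynomial.C (c' i₀) := by
          rw [Finset.sum_eq_single i₀]
          · rw [if_pos rfl, mul_one]
          · intro b _ hb; rw [if_neg hb, mul_zero]
          · simp
        rw [s1, s2]
        rw [map_sub, map_mul]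
        ring
      rw [hval]
      by_cases hcc : c' = c
      · subst hcc
        have hz : c' j - c' j / c' i₀ * c' i₀ = 0 := by
          rw [div_mul_eq_mul_div, mul_div_assoc, div_self hi₀', mul_one, sub_self]
        rw [hz, map_zero, mul_zero]
        exact dvd_zero _
      · have : linForm c' ^ m c' ∣ Q' :=
          Finset.dvd_prod_of_mem _ (Finset.mem_erase.mpr ⟨hcc, hc'⟩)
        exact (this.mul_right _)
  -- determinant of N
  have hdetN : N.det = Qp A m * Q' ^ (ℓ - 1) := by
    set P : Matrix (Fin ℓ) (Fin ℓ) (S K ℓ) := Matrix.of (fun k j =>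
      if j = i₀ then (if k = i₀ then 1 else 0)
      else (if k = j then 1 else 0)
        - MvPolynomial.C (c j / c i₀) * (if k = i₀ then 1 else 0)) with hP
    set sc : Fin ℓ → S K ℓ := fun j => if j = i₀ then Qp A m else Q' with hsc
    have hfact : N = P * Matrix.diagonal sc := by
      apply Matrix.ext
      intro k j
      rw [Matrix.mul_diagonal]
      by_cases hj : j = i₀
      · by_cases hk : k = i₀ <;> simp [hN, hP, hsc, hj, hk]
      · simp only [hN, hP, hsc, Matrix.of_apply, if_neg hj]
        ring
    have hdetP : P.det = 1 := by
      have hPu : P = (1 : Matrix (Fin ℓ) (Fin ℓ) (S K ℓ)).updateRow i₀ (fun j => P i₀ j) := by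
        apply Matrix.ext
        intro k j
        by_cases hk : k = i₀
        · subst hk; rw [Matrix.updateRow_self]
        · rw [Matrix.updateRow_ne hk]
          by_cases hj : j = i₀ <;>
            simp [hP, Matrix.one_apply, hj, hk]
      rw [hPu, ← Matrix.cramer_transpose_apply, Matrix.transpose_one, Matrix.cramer_one,
        Module.End.one_apply]
      simp [hP]
    rw [hfact, Matrix.det_mul, hdetP, one_mul, Matrix.det_diagonal]
    rw [← Finset.mul_prod_erase _ _ (Finset.mem_univ i₀)]
    have : ∀ j ∈ Finset.univ.erase i₀, sc j = Q' := by
      intro j hj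
      rw [hsc]
      simp only [if_neg (Finset.mem_erase.mp hj).1]
    rw [Finset.prod_congr rfl this, Finset.prod_const, hsc]
    simp only [if_pos rfl]
    congr 1
    rw [Finset.card_erase_of_mem (Finset.mem_univ i₀), Finset.card_univ, Fintype.card_fin]
  have hsN : saito ξ = N := by
    apply Matrix.ext
    intro k j
    show MvPolynomial.mkDerivation K _ (MvPolynomial.X k) = _
    rw [MvPolynomial.mkDerivation_X]
  have := det_dvd_det A m θ hB ξ hlog
  rw [hsN, hdetN] at this
  exact this

end Converse


section Final

lemma isUnit_of_basis (A : Arrangement K ℓ) (m : (Fin ℓ → K) → ℕ) (θ : Fin ℓ → Der K ℓ)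
    (hB : IsDerBasis A m θ) {f : S K ℓ} (hf : (saito θ).det = f * Qp A m) :
    IsUnit f := by
  classical
  have h1 : f * Qp A m ∣ (Qp A m) ^ ℓ := hf ▸ det_dvd_Qpow A m θ hB
  have hfd : f ∣ (Qp A m) ^ ℓ := (dvd_mul_right f (Qp A m)).trans h1
  have hf0 : f ≠ 0 := by
    rintro rfl
    exact pow_ne_zero ℓ (Qp_ne_zero A m) (zero_dvd_iff.mp hfd)
  have hnd : ∀ c ∈ A.hyps, ¬ linForm c ∣ f := by
    intro c hc hdvd
    set Q' : S K ℓ := ∏ c' ∈ A.hyps.erase c, linForm c' ^ m c' with hQ'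
    have h2 : f * Qp A m ∣ Qp A m * Q' ^ (ℓ - 1) := hf ▸ det_dvd_Qres A m θ hB hc
    have h3 : f ∣ Q' ^ (ℓ - 1) := by
      obtain ⟨u, hu⟩ := h2
      refine ⟨u, mul_left_cancel₀ (Qp_ne_zero A m) ?_⟩
      calc Qp A m * Q' ^ (ℓ - 1) = f * Qp A m * u := hu
        _ = Qp A m * (f * u) := by ring
    have hprime : Prime (linForm c) := linForm_prime (A.ne_zero c hc)
    have h4 : linForm c ∣ Q' := hprime.dvd_of_dvd_pow (hdvd.trans h3)
    obtain ⟨c', hc', hdd⟩ := hprime.exists_mem_finset_dvd h4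
    obtain ⟨hne, hc'A⟩ := Finset.mem_erase.mp hc'
    exact linForm_not_dvd_of_mem A hc hc'A (fun hh => hne (hh ▸ rfl))
      (hprime.dvd_of_dvd_pow hdd)
  by_contra hnu
  obtain ⟨q, hqirr, hqf⟩ := WfDvdMonoid.exists_irreducible_factor hnu hf0
  have hqprime : Prime q := (UniqueFactorizationMonoid.irreducible_iff_prime).mp hqirr
  have hq1 : q ∣ Qp A m := hqprime.dvd_of_dvd_pow (hqf.trans hfd)
  obtain ⟨c, hc, hdd⟩ := hqprime.exists_mem_finset_dvd hq1
  have hq2 : q ∣ linForm c := hqprime.dvd_of_dvd_pow hdd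
  have hassoc : Associated q (linForm c) :=
    hqirr.associated_of_dvd (linForm_irreducible (A.ne_zero c hc)) hq2
  exact hnd c hc (hassoc.symm.dvd.trans hqf)

lemma saito_det_homog (θ : Fin ℓ → Der K ℓ) (d : Fin ℓ → ℕ)
    (hd : ∀ i, IsHomogOfDeg (θ i) (d i)) :
    (saito θ).det.IsHomogeneous (∑ i, d i) := by
  classical
  have hent : ∀ i j, (saito θ i j).IsHomogeneous (d j) := by
    intro i j
    have := hd j (Pi.single i (1:K))
    rwa [linForm_single] at this
  rw [Matrix.det_apply]
  refine MvPolynomial.IsHomogeneous.sum _ _ _ (fun σ _ => ?_)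
  have hprod : (∏ i, saito θ (σ i) i).IsHomogeneous (∑ i, d i) :=
    MvPolynomial.IsHomogeneous.prod _ _ _ (fun i _ => hent (σ i) i)
  rcases Int.units_eq_one_or (Equiv.Perm.sign σ) with h | h <;> rw [h]
  · simpa using hprod
  · have : ((-1 : ℤˣ) • ∏ i, saito θ (σ i) i) = -(∏ i, saito θ (σ i) i) := by
      rw [Units.smul_def]
      simp
    rw [this]
    exact hprod.neg

end Final

theorem stmt6 (A : Arrangement K ℓ) (m : (Fin ℓ → K) → ℕ)
    (hm : ∀ c ∈ A.hyps, 0 < m c) (θ : Fin ℓ → Der K ℓ)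
    (hθ : ∀ i, IsLogDer A m (θ i)) :
    (∃ f : S K ℓ, (Matrix.of fun i j => θ j (MvPolynomial.X i)).det
        = f * ∏ c ∈ A.hyps, linForm c ^ (m c)) ∧
    (IsDerBasis A m θ ↔ ∃ t : K, t ≠ 0 ∧
        (Matrix.of fun i j => θ j (MvPolynomial.X i)).det
          = MvPolynomial.C t * ∏ c ∈ A.hyps, linForm c ^ (m c)) ∧
    (∀ d : Fin ℓ → ℕ, (∀ i, IsHomogOfDeg (θ i) (d i)) →
      (IsDerBasis A m θ ↔ (LinearIndependent (S K ℓ) θ ∧ ∑ i, d i = msum A m))) := by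
  classical
  have hMs : (Matrix.of fun i j => θ j (MvPolynomial.X i)) = saito θ := rfl
  have hQs : (∏ c ∈ A.hyps, linForm c ^ (m c)) = Qp A m := rfl
  obtain ⟨f, hf0⟩ := Q_dvd_det A m θ hθ
  have hf : (saito θ).det = f * Qp A m := by rw [hf0, Qp, mul_comm]
  have part2 : IsDerBasis A m θ ↔ ∃ t : K, t ≠ 0 ∧
      (saito θ).det = MvPolynomial.C t * Qp A m := by
    constructor
    · intro hB
      obtain ⟨t, ht, hft⟩ := isUnit_S_iff.mp (isUnit_of_basis A m θ hB hf)
      exact ⟨t, ht, by rw [hf, hft]⟩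
    · rintro ⟨t, ht, hdet⟩
      exact isDerBasis_of_det A m θ hθ ht hdet
  refine ⟨⟨f, by rw [hMs, hQs]; exact hf⟩, by rw [hMs, hQs]; exact part2, ?_⟩
  intro d hd
  have hdet_homog : (saito θ).det.IsHomogeneous (∑ i, d i) := saito_det_homog θ d hd
  constructor
  · intro hB
    obtain ⟨t, ht, hdet⟩ := part2.mp hB
    have hdet0 : (saito θ).det ≠ 0 := by
      rw [hdet]
      exact mul_ne_zero (by simpa using ht) (Qp_ne_zero A m)
    constructor
    · rw [Fintype.linearIndependent_iff]
      intro g hg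
      have hzero : (∑ i, g i • θ i : Der K ℓ) = ∑ i, (0 : S K ℓ) • θ i := by
        rw [hg]
        simp
      have := repr_unique hdet0 hzero
      intro i
      exact congrFun this i
    · have h2 : (saito θ).det.IsHomogeneous (msum A m) := by
        rw [hdet]
        simpa using (MvPolynomial.isHomogeneous_C _ t).mul (Qp_isHomogeneous A m)
      exact hdet_homog.inj_right h2 hdet0
  · rintro ⟨hind, hsum⟩
    have hdet0 : (saito θ).det ≠ 0 := by
      intro h0
      obtain ⟨v, hv0, hmv⟩ := (Matrix.exists_mulVec_eq_zero_iff).mpr h0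
      have hsum0 : (∑ j, v j • θ j : Der K ℓ) = 0 := by
        apply MvPolynomial.derivation_ext
        intro k
        rw [sum_smul_der_apply]
        have := congrFun hmv k
        simp only [Matrix.mulVec, dotProduct, Pi.zero_apply] at this
        have hz : (0 : Der K ℓ) (MvPolynomial.X k) = 0 := by simp
        rw [hz, ← this]
        exact Finset.sum_congr rfl (fun i _ => mul_comm _ _)
      have := Fintype.linearIndependent_iff.mp hind v hsum0
      exact hv0 (funext this)
    have hff0 : f ≠ 0 := by
      rintro rfl
      rw [hf, zero_mul] at hdet0
      exact hdet0 rfl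
    have htdf : f.totalDegree = 0 := by
      have h1 : (saito θ).det.totalDegree = msum A m := by
        rw [hsum] at hdet_homog
        exact hdet_homog.totalDegree hdet0
      have h2 : (f * Qp A m).totalDegree = f.totalDegree + msum A m := by
        rw [totalDegree_mul_eq hff0 (Qp_ne_zero A m),
          (Qp_isHomogeneous A m).totalDegree (Qp_ne_zero A m)]
      rw [hf] at h1
      rw [h1] at h2
      omega
    have hfc := eq_C_of_td_zero htdf
    have ht : MvPolynomial.coeff 0 f ≠ 0 := by
      intro h0
      rw [hfc, h0, map_zero] at hff0
      exact hff0 rfl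
    refine isDerBasis_of_det A m θ hθ ht ?_
    rw [hf]
    conv_lhs => rw [hfc]

end ArrPaper
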